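/- Let P₁, …, P_ν (ν ≥ 2) be the distinct stable plateaux of a finite connected graph with energy H. For each i define Γᵢ = Φ(Pᵢ, ∪_{j≠i} Pⱼ) − H(Pᵢ) and Vᵢ = {η : Φ(Pᵢ, η) − H(Pᵢ) < Γᵢ}. Then the sets V₁, …, V_ν are pairwise disjoint. -/

import Mathlib

open SimpleGraph

variable {Ω : Type*}

/-- The height of a walk: the maximum of the energy `H` along its support. -/
noncomputable def walkHeight (H : Ω → ℝ) {G : SimpleGraph Ω} {a b : Ω} (w : G.Walk a b) : ℝ :=
  (w.support.map H).foldr max (H b)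

/-- The communication height between two vertices: minimal height over all paths. -/
noncomputable def commHeight (G : SimpleGraph Ω) (H : Ω → ℝ) (a b : Ω) : ℝ :=
  sInf {h : ℝ | ∃ w : G.Walk a b, walkHeight H w = h}

/-- Outer boundary of a set of vertices. -/
def outerBoundary (G : SimpleGraph Ω) (A : Set Ω) : Set Ω :=
  {ξ | ξ ∉ A ∧ ∃ η ∈ A, G.Adj ξ η}

/-- A (nontrivial) cycle: nonempty, connected, proper, with `max_C H < min_{∂C} H`. -/
def IsCycleSet (G : SimpleGraph Ω) (H : Ω → ℝ) (C : Set Ω) : Prop :=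
  C.Nonempty ∧ (G.induce C).Connected ∧ C ≠ Set.univ ∧
    ∀ η ∈ C, ∀ ξ ∈ outerBoundary G C, H η < H ξ

/-- A stable plateau: nonempty, connected, constant energy, strictly higher on the boundary. -/
def IsStablePlateau (G : SimpleGraph Ω) (H : Ω → ℝ) (P : Set Ω) : Prop :=
  P.Nonempty ∧ (G.induce P).Connected ∧ (∀ x ∈ P, ∀ y ∈ P, H x = H y) ∧
    ∀ x ∈ P, ∀ ζ ∈ outerBoundary G P, H x < H ζ

/-- Communication height between two sets. -/
noncomputable def commHeightSet (G : SimpleGraph Ω) (H : Ω → ℝ) (A B : Set Ω) : ℝ :=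
  sInf {h : ℝ | ∃ a ∈ A, ∃ b ∈ B, commHeight G H a b = h}

/-- The bottom of a set: the minimizers of `H` on it. -/
def bottom (H : Ω → ℝ) (C : Set Ω) : Set Ω := {x ∈ C | ∀ y ∈ C, H x ≤ H y}

/-- `A` is a connected component of `S`: a maximal nonempty connected subset of `S`. -/
def IsConnectedComponentOf (G : SimpleGraph Ω) (S A : Set Ω) : Prop :=
  A ⊆ S ∧ A.Nonempty ∧ (G.induce A).Connected ∧
    ∀ B : Set Ω, A ⊆ B → B ⊆ S → (G.induce B).Connected → B = A

set_option linter.unusedSectionVars false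

section Aux
variable [Fintype Ω]

private lemma foldr_max_mem (a : ℝ) (l : List ℝ) : l.foldr max a ∈ a :: l := by
  induction l with
  | nil => simp
  | cons x l ih =>
    simp only [List.foldr_cons]
    rcases max_choice x (l.foldr max a) with h | h
    · rw [h]; simp
    · rw [h]
      rcases List.mem_cons.mp ih with h' | h'
      · exact List.mem_cons.mpr (Or.inl h')
      · exact List.mem_cons.mpr (Or.inr (List.mem_cons.mpr (Or.inr h')))

private lemma le_foldr_max (a : ℝ) (l : List ℝ) : ∀ x ∈ a :: l, x ≤ l.foldr max a := by
  induction l with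
  | nil => simp
  | cons y l ih =>
    intro x hx
    simp only [List.foldr_cons]
    rcases List.mem_cons.mp hx with rfl | h
    · exact le_max_of_le_right (ih x (by simp))
    · rcases List.mem_cons.mp h with rfl | h'
      · exact le_max_left _ _
      · exact le_max_of_le_right (ih x (by simp [h']))

lemma exists_walkHeight_eq (H : Ω → ℝ) {G : SimpleGraph Ω} {a b : Ω} (w : G.Walk a b) :
    ∃ x ∈ w.support, walkHeight H w = H x := by
  have h := foldr_max_mem (H b) (w.support.map H)
  rcases List.mem_cons.mp h with h | h
  · exact ⟨b, w.end_mem_support, h⟩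
  · rcases List.mem_map.mp h with ⟨x, hx, hxe⟩
    exact ⟨x, hx, hxe.symm⟩

lemma le_walkHeight (H : Ω → ℝ) {G : SimpleGraph Ω} {a b x : Ω} (w : G.Walk a b)
    (hx : x ∈ w.support) : H x ≤ walkHeight H w :=
  le_foldr_max (H b) (w.support.map H) (H x)
    (List.mem_cons.mpr (Or.inr (List.mem_map.mpr ⟨x, hx, rfl⟩)))

lemma heights_subset_range (H : Ω → ℝ) {G : SimpleGraph Ω} {a b : Ω} :
    {h : ℝ | ∃ w : G.Walk a b, walkHeight H w = h} ⊆ Set.range H := by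
  rintro h ⟨w, rfl⟩
  obtain ⟨x, _, hx⟩ := exists_walkHeight_eq H w
  exact ⟨x, hx.symm⟩


lemma commHeight_le_walkHeight (H : Ω → ℝ) {G : SimpleGraph Ω} {a b : Ω} (w : G.Walk a b) :
    commHeight G H a b ≤ walkHeight H w :=
  csInf_le (((Set.finite_range H).subset (heights_subset_range H)).bddBelow) ⟨w, rfl⟩

lemma exists_walk_commHeight (H : Ω → ℝ) {G : SimpleGraph Ω} (hG : G.Connected) (a b : Ω) :
    ∃ w : G.Walk a b, walkHeight H w = commHeight G H a b := by
  have hne : {h : ℝ | ∃ w : G.Walk a b, walkHeight H w = h}.Nonempty := by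
    obtain ⟨w⟩ := hG.preconnected a b
    exact ⟨_, w, rfl⟩
  exact hne.csInf_mem ((Set.finite_range H).subset (heights_subset_range H))

lemma walkHeight_reverse_le (H : Ω → ℝ) {G : SimpleGraph Ω} {a b : Ω} (w : G.Walk a b) :
    walkHeight H w.reverse ≤ walkHeight H w := by
  obtain ⟨x, hx, hxe⟩ := exists_walkHeight_eq H w.reverse
  rw [hxe]
  exact le_walkHeight H w (by simpa using hx)

lemma commHeight_symm_le (H : Ω → ℝ) {G : SimpleGraph Ω} (hG : G.Connected) (a b : Ω) :
    commHeight G H a b ≤ commHeight G H b a := by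
  obtain ⟨w, hw⟩ := exists_walk_commHeight H hG b a
  calc commHeight G H a b ≤ walkHeight H w.reverse := commHeight_le_walkHeight H w.reverse
    _ ≤ walkHeight H w := walkHeight_reverse_le H w
    _ = _ := hw

lemma walkHeight_append_le (H : Ω → ℝ) {G : SimpleGraph Ω} {a b c : Ω}
    (w1 : G.Walk a b) (w2 : G.Walk b c) :
    walkHeight H (w1.append w2) ≤ max (walkHeight H w1) (walkHeight H w2) := by
  obtain ⟨x, hx, hxe⟩ := exists_walkHeight_eq H (w1.append w2)
  rw [hxe]
  rcases (SimpleGraph.Walk.mem_support_append_iff w1 w2).mp hx with h | h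
  · exact le_max_of_le_left (le_walkHeight H w1 h)
  · exact le_max_of_le_right (le_walkHeight H w2 h)

lemma commHeight_triangle (H : Ω → ℝ) {G : SimpleGraph Ω} (hG : G.Connected) (a b c : Ω) :
    commHeight G H a c ≤ max (commHeight G H a b) (commHeight G H b c) := by
  obtain ⟨w1, hw1⟩ := exists_walk_commHeight H hG a b
  obtain ⟨w2, hw2⟩ := exists_walk_commHeight H hG b c
  calc commHeight G H a c ≤ walkHeight H (w1.append w2) := commHeight_le_walkHeight H _
    _ ≤ max (walkHeight H w1) (walkHeight H w2) := walkHeight_append_le H w1 w2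
    _ = _ := by rw [hw1, hw2]

lemma setHeights_subset_range (H : Ω → ℝ) {G : SimpleGraph Ω} (hG : G.Connected) (A B : Set Ω) :
    {h : ℝ | ∃ a ∈ A, ∃ b ∈ B, commHeight G H a b = h} ⊆ Set.range H := by
  rintro h ⟨a, ha, b, hb, rfl⟩
  obtain ⟨w, hw⟩ := exists_walk_commHeight H hG a b
  obtain ⟨x, _, hx⟩ := exists_walkHeight_eq H w
  exact ⟨x, by rw [← hw, hx]⟩

lemma commHeightSet_le (H : Ω → ℝ) {G : SimpleGraph Ω} (hG : G.Connected) {A B : Set Ω}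
    {a b : Ω} (ha : a ∈ A) (hb : b ∈ B) :
    commHeightSet G H A B ≤ commHeight G H a b :=
  csInf_le (((Set.finite_range H).subset (setHeights_subset_range H hG A B)).bddBelow)
    ⟨a, ha, b, hb, rfl⟩

lemma exists_commHeightSet_eq (H : Ω → ℝ) {G : SimpleGraph Ω} (hG : G.Connected) {A B : Set Ω}
    (hA : A.Nonempty) (hB : B.Nonempty) :
    ∃ a ∈ A, ∃ b ∈ B, commHeightSet G H A B = commHeight G H a b := by
  obtain ⟨a, ha⟩ := hA
  obtain ⟨b, hb⟩ := hB
  have hne : {h : ℝ | ∃ a ∈ A, ∃ b ∈ B, commHeight G H a b = h}.Nonempty :=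
    ⟨_, a, ha, b, hb, rfl⟩
  have := hne.csInf_mem ((Set.finite_range H).subset (setHeights_subset_range H hG A B))
  obtain ⟨a', ha', b', hb', he⟩ := this
  exact ⟨a', ha', b', hb', he.symm⟩

end Aux

/-- the valleys `Vᵢ` around the stable plateaux are pairwise disjoint. -/
theorem valleys_disjoint [Fintype Ω] (G : SimpleGraph Ω) (hG : G.Connected) (H : Ω → ℝ)
    (ν : ℕ) (hν : 2 ≤ ν) (P : Fin ν → Set Ω)
    (hP : ∀ i, IsStablePlateau G H (P i))
    (hPinj : Function.Injective P)
    (hPall : ∀ Q : Set Ω, IsStablePlateau G H Q → ∃ i, Q = P i)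
    (p : Fin ν → Ω) (hp : ∀ i, p i ∈ P i)
    (Γ : Fin ν → ℝ)
    (hΓ : ∀ i, Γ i = commHeightSet G H (P i) {x | ∃ j, j ≠ i ∧ x ∈ P j} - H (p i))
    (V : Fin ν → Set Ω)
    (hV : ∀ i, V i = {η | commHeightSet G H (P i) {η} - H (p i) < Γ i}) :
    ∀ i j, i ≠ j → Disjoint (V i) (V j) := by
  intro i j hij
  rw [Set.disjoint_left]
  intro η hi hj
  have hne : ∀ k : Fin ν, ({x | ∃ l, l ≠ k ∧ x ∈ P l} : Set Ω).Nonempty := by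
    intro k
    obtain ⟨l, hl⟩ := Fintype.exists_ne_of_one_lt_card (by rw [Fintype.card_fin]; omega) k
    exact ⟨p l, l, hl, hp l⟩
  have key : ∀ k l : Fin ν, k ≠ l →
      commHeightSet G H (P k) {x | ∃ m, m ≠ k ∧ x ∈ P m} ≤
        max (commHeightSet G H (P k) {η}) (commHeightSet G H (P l) {η}) := by
    intro k l hkl
    obtain ⟨a, ha, η₁, hη₁, hae⟩ :=
      exists_commHeightSet_eq H hG (hP k).1 (Set.singleton_nonempty η)
    obtain ⟨b, hb, η₂, hη₂, hbe⟩ :=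
      exists_commHeightSet_eq H hG (hP l).1 (Set.singleton_nonempty η)
    rw [Set.mem_singleton_iff] at hη₁ hη₂
    rw [hη₁] at hae
    rw [hη₂] at hbe
    calc commHeightSet G H (P k) {x | ∃ m, m ≠ k ∧ x ∈ P m}
        ≤ commHeight G H a b := commHeightSet_le H hG ha ⟨l, hkl.symm, hb⟩
      _ ≤ max (commHeight G H a η) (commHeight G H η b) := commHeight_triangle H hG a η b
      _ ≤ max (commHeightSet G H (P k) {η}) (commHeightSet G H (P l) {η}) := by
          rw [hae, hbe]
          exact max_le_max le_rfl (commHeight_symm_le H hG η b)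
  have hVi : commHeightSet G H (P i) {η} < commHeightSet G H (P i) {x | ∃ m, m ≠ i ∧ x ∈ P m} := by
    rw [hV i] at hi
    have := hΓ i
    simp only [Set.mem_setOf_eq] at hi
    linarith [hi, this ▸ hi]
  have hVj : commHeightSet G H (P j) {η} < commHeightSet G H (P j) {x | ∃ m, m ≠ j ∧ x ∈ P m} := by
    rw [hV j] at hj
    have := hΓ j
    simp only [Set.mem_setOf_eq] at hj
    linarith [hj, this ▸ hj]
  rcases le_total (commHeightSet G H (P i) {x | ∃ m, m ≠ i ∧ x ∈ P m})
      (commHeightSet G H (P j) {x | ∃ m, m ≠ j ∧ x ∈ P m}) with hle | hle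
  · have h1 := key j i hij.symm
    have h2 : max (commHeightSet G H (P j) {η}) (commHeightSet G H (P i) {η}) <
        commHeightSet G H (P j) {x | ∃ m, m ≠ j ∧ x ∈ P m} :=
      max_lt hVj (lt_of_lt_of_le hVi hle)
    linarith
  · have h1 := key i j hij
    have h2 : max (commHeightSet G H (P i) {η}) (commHeightSet G H (P j) {η}) <
        commHeightSet G H (P i) {x | ∃ m, m ≠ i ∧ x ∈ P m} :=
      max_lt hVi (lt_of_lt_of_le hVj hle)
    linarith
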